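/- Let λ be a partition of n with c_i parts equal to i for each i, and let ℓ = ℓ(λ) be its number of parts. Then the number of Dyck paths of order n having exactly c_i maximal vertical runs of length i for each i equals (1/(n+1)) · multinomial(n+1; c₁, c₂, …, c_n, n−ℓ+1). -/

import Mathlib

/-- A Dyck path of order `n`, encoded as a word in `Bool` (with `true` = north
    step, `false` = east step): length `2n`, `n` north steps, and every prefix
    has at least as many north steps as east steps (path stays weakly above `y=x`). -/
def IsDyck (n : ℕ) (D : List Bool) : Prop :=
  D.length = 2 * n ∧ D.count true = n ∧
    ∀ k, (D.take k).count false ≤ (D.take k).count true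

/-- Auxiliary: lengths of maximal runs of `true` (north steps); the first
    argument accumulates the length of the current run. -/
def runLensAux : ℕ → List Bool → List ℕ
  | 0, [] => []
  | k + 1, [] => [k + 1]
  | 0, false :: l => runLensAux 0 l
  | k + 1, false :: l => (k + 1) :: runLensAux 0 l
  | k, true :: l => runLensAux (k + 1) l
  termination_by _ l => l.length

/-- The list of lengths of the maximal vertical runs of a Dyck word. -/
def runLens (D : List Bool) : List ℕ := runLensAux 0 D

namespace DyckAux

/-- encode a run sequence as a Dyck-type word -/
def enc : List ℕ → List Bool
  | [] => []
  | x :: a => List.replicate x true ++ false :: enc a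

/-- decode: run lengths before each east step -/
def dec : ℕ → List Bool → List ℕ
  | _, [] => []
  | k, true :: l => dec (k + 1) l
  | k, false :: l => k :: dec 0 l

@[simp] lemma enc_nil : enc [] = [] := rfl
@[simp] lemma enc_cons (x : ℕ) (a : List ℕ) :
    enc (x :: a) = List.replicate x true ++ false :: enc a := rfl

lemma enc_append (a b : List ℕ) : enc (a ++ b) = enc a ++ enc b := by
  induction a with
  | nil => simp
  | cons x a ih => simp [ih]

@[simp] lemma length_enc (a : List ℕ) : (enc a).length = a.sum + a.length := by
  induction a with
  | nil => simp
  | cons x a ih => simp [ih]; omega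

@[simp] lemma count_true_enc (a : List ℕ) : (enc a).count true = a.sum := by
  induction a with
  | nil => simp
  | cons x a ih => simp [List.count_append, ih]

@[simp] lemma count_false_enc (a : List ℕ) : (enc a).count false = a.length := by
  induction a with
  | nil => simp
  | cons x a ih => simp [List.count_append, List.count_replicate, ih]

lemma runLensAux_true (k : ℕ) (l : List Bool) :
    runLensAux k (true :: l) = runLensAux (k + 1) l := by
  cases k <;> simp [runLensAux]

lemma runLensAux_replicate (m : ℕ) (k : ℕ) (l : List Bool) :
    runLensAux k (List.replicate m true ++ l) = runLensAux (k + m) l := by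
  induction m generalizing k with
  | zero => simp
  | succ m ih =>
      rw [List.replicate_succ, List.cons_append, runLensAux_true, ih]
      congr 1
      omega

lemma runLens_enc (a : List ℕ) : runLens (enc a) = a.filter (· ≠ 0) := by
  induction a with
  | nil => simp [runLens, runLensAux]
  | cons x a ih =>
      unfold runLens at *
      cases x with
      | zero => simpa [runLensAux_replicate, runLensAux] using ih
      | succ x => simpa [runLensAux_replicate, runLensAux] using ih

lemma dec_replicate (m k : ℕ) (l : List Bool) :
    dec k (List.replicate m true ++ l) = dec (k + m) l := by
  induction m generalizing k with
  | zero => simp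
  | succ m ih =>
      rw [List.replicate_succ, List.cons_append]
      show dec (k + 1) (List.replicate m true ++ l) = _
      rw [ih]
      congr 1
      omega

lemma dec_enc (a : List ℕ) : dec 0 (enc a) = a := by
  induction a with
  | nil => rfl
  | cons x a ih => simp [dec_replicate, dec, ih]

lemma enc_dec (D : List Bool) (k : ℕ) (hlast : D.getLast? ≠ some true)
    (hnil : D = [] → k = 0) :
    enc (dec k D) = List.replicate k true ++ D := by
  induction D generalizing k with
  | nil => simp [hnil rfl, dec]
  | cons b l ih =>
      cases b with
      | false =>
          have h' : l.getLast? ≠ some true := by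
            cases l with
            | nil => simp
            | cons c l' => simpa [List.getLast?_cons_cons] using hlast
          have e := ih 0 h' (fun _ => rfl)
          simp only [List.replicate_zero, List.nil_append] at e
          simp [dec, e]
      | true =>
          have hne : l ≠ [] := by
            rintro rfl; simp at hlast
          have h' : l.getLast? ≠ some true := by
            cases l with
            | nil => simp at hne
            | cons c l' => simpa [List.getLast?_cons_cons] using hlast
          have e := ih (k + 1) h' (fun h => absurd h hne)
          show enc (dec (k + 1) l) = _
          rw [e, List.replicate_succ']
          simp

/-- prefix-domination for encoded words, with slack -/
lemma enc_prefix_count (a : List ℕ) (s : ℕ)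
    (h : ∀ j ≤ a.length, j ≤ s + (a.take j).sum) (k : ℕ) :
    ((enc a).take k).count false ≤ s + ((enc a).take k).count true := by
  induction a generalizing s k with
  | nil => simp
  | cons x a ih =>
      rcases le_or_gt k x with hk | hk
      · rw [enc_cons, List.take_append]
        have : k - (List.replicate x true).length = 0 := by simp; omega
        rw [this]
        simp [List.take_replicate, List.count_replicate]
      · have h1 : 1 ≤ s + x := by
          have := h 1 (by simp)
          simpa using this
        rw [enc_cons, List.take_append]
        have hxk : (List.replicate x true).take k = List.replicate x true := by
          apply List.take_of_length_le; simp; omega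
        rw [hxk]
        have hk' : k - (List.replicate x true).length = (k - x - 1) + 1 := by
          simp; omega
        rw [hk']
        have ih' := ih (s + x - 1) (fun j hj => by
          have := h (j + 1) (by simpa using Nat.succ_le_succ hj)
          simp [List.take_cons, List.sum_cons] at this ⊢
          omega) (k - x - 1)
        simp only [List.take_cons, List.count_cons, List.count_append,
          List.count_replicate] at *
        simp at *
        omega

lemma take_enc_take (a : List ℕ) (j : ℕ) (hj : j ≤ a.length) :
    (enc a).take ((a.take j).sum + j) = enc (a.take j) := by
  have hsplit : enc a = enc (a.take j) ++ enc (a.drop j) := by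
    rw [← enc_append, List.take_append_drop]
  have hlen : (enc (a.take j)).length = (a.take j).sum + j := by
    simp [List.length_take, Nat.min_eq_left hj]
  rw [hsplit, ← hlen, List.take_left]

end DyckAux

namespace DyckAux

lemma count_false_add_count_true (D : List Bool) : D.count false + D.count true = D.length := by
  induction D with
  | nil => simp
  | cons b l ih => cases b <;> simp [List.count_cons] <;> omega

lemma sum_take_le (l : List ℕ) (j : ℕ) : (l.take j).sum ≤ l.sum := by
  conv_rhs => rw [← List.take_append_drop j l]
  rw [List.sum_append]
  exact Nat.le_add_right _ _

lemma getLast_not_true {n : ℕ} {D : List Bool} (h : IsDyck n D) :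
    D.getLast? ≠ some true := by
  obtain ⟨hlen, hct, hpre⟩ := h
  intro hl
  obtain ⟨l', rfl⟩ := List.getLast?_eq_some_iff.mp hl
  have hcf : (l' ++ [true]).count false + (l' ++ [true]).count true = 2 * n :=
    (count_false_add_count_true _).trans hlen
  have hp := hpre l'.length
  rw [List.take_left] at hp
  simp [List.count_append] at hct hcf
  omega

/-- the conditions on the run sequence -/
def Apred (n : ℕ) (c : ℕ → ℕ) (a : List ℕ) : Prop :=
  a.length = n ∧ a.sum = n ∧ (∀ j ≤ n, j ≤ (a.take j).sum) ∧
    ∀ i, i ≠ 0 → a.count i = c i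

lemma apred_of_dyck {n : ℕ} {c : ℕ → ℕ} {D : List Bool} (h : IsDyck n D)
    (hcnt : ∀ i, (runLens D).count i = c i) :
    Apred n c (dec 0 D) ∧ enc (dec 0 D) = D := by
  have e : enc (dec 0 D) = D := by
    have := enc_dec D 0 (getLast_not_true h) (fun _ => rfl)
    simpa using this
  obtain ⟨hlen, hct, hpre⟩ := h
  have hcc := count_false_add_count_true D
  set a := dec 0 D with ha
  have hl : a.length = n := by
    have := count_false_enc a
    rw [e] at this
    omega
  have hs : a.sum = n := by
    have := count_true_enc a
    rw [e] at this
    omega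
  refine ⟨⟨hl, hs, ?_, ?_⟩, e⟩
  · intro j hj
    have hp := hpre ((a.take j).sum + j)
    rw [← e, take_enc_take a j (by omega), count_false_enc, count_true_enc,
      List.length_take] at hp
    omega
  · intro i hi
    have : runLens D = a.filter (· ≠ 0) := by rw [← e, runLens_enc]
    rw [this] at hcnt
    have := hcnt i
    rwa [List.count_filter (by simpa using hi)] at this

lemma dyck_of_apred {n : ℕ} {c : ℕ → ℕ} (hc0 : c 0 = 0) {a : List ℕ}
    (h : Apred n c a) :
    IsDyck n (enc a) ∧ ∀ i, (runLens (enc a)).count i = c i := by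
  obtain ⟨hl, hs, htake, hcnt⟩ := h
  refine ⟨⟨by simp [hl, hs]; omega, by simp [hs], ?_⟩, ?_⟩
  · intro k
    have := enc_prefix_count a 0 (fun j hj => by
      simpa using htake j (hl ▸ hj)) k
    simpa using this
  · intro i
    rw [runLens_enc]
    rcases eq_or_ne i 0 with rfl | hi
    · rw [hc0]
      simp [List.count_eq_zero]
    · rw [List.count_filter (by simpa using hi)]
      exact hcnt i hi

end DyckAux

namespace DyckAux

def goodW (w : List ℕ) : Prop := ∀ j < w.length, j ≤ (w.take j).sum

def Wpred (n : ℕ) (c : ℕ → ℕ) (w : List ℕ) : Prop :=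
  w.length = n + 1 ∧ ∀ i, i ≠ 0 → w.count i = c i

end DyckAux

namespace DyckAux


lemma sum_take_rotate (w : List ℕ) (k j : ℕ) (hk : k ≤ w.length)
    (hj : j ≤ w.length - k) :
    ((w.rotate k).take j).sum + (w.take k).sum = (w.take (k + j)).sum := by
  rw [List.rotate_eq_drop_append_take hk, List.take_append]
  have h0 : j - (w.drop k).length = 0 := by simp; omega
  rw [h0, List.take_zero, List.append_nil, List.take_add, List.sum_append]
  omega

lemma sum_take_rotate' (w : List ℕ) (k j : ℕ) (hk : k ≤ w.length)
    (hj : w.length - k ≤ j) (hj2 : j ≤ w.length) :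
    ((w.rotate k).take j).sum + (w.take k).sum
      = w.sum + (w.take (j - (w.length - k))).sum := by
  rw [List.rotate_eq_drop_append_take hk, List.take_append]
  have h1 : (w.drop k).take j = w.drop k := List.take_of_length_le (by simp; omega)
  have h2 : (w.take k).take (j - (w.drop k).length) = w.take (j - (w.length - k)) := by
    rw [List.take_take, List.length_drop]
    congr 1
    omega
  rw [h1, h2, List.sum_append]
  have h3 : (w.take (j - (w.length - k))).sum + (w.drop (j - (w.length - k))).sum = w.sum := by
    rw [← List.sum_append, List.take_append_drop]
  have h4 : (w.take k).sum + (w.drop k).sum = w.sum := by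
    rw [← List.sum_append, List.take_append_drop]
  omega

lemma good_rotate_iff (w : List ℕ) (n : ℕ) (hN : w.length = n + 1) (hs : w.sum = n)
    (k : ℕ) (hk1 : 1 ≤ k) (hk2 : k ≤ n + 1) :
    goodW (w.rotate k) ↔
      (∀ m ≤ n + 1, (w.take k).sum + m ≤ (w.take m).sum + k) ∧
        (∀ i < k, (w.take k).sum + i + 1 ≤ (w.take i).sum + k) := by
  have hlr : (w.rotate k).length = n + 1 := by simp [hN]
  constructor
  · intro g
    have strict : ∀ i < k, (w.take k).sum + i + 1 ≤ (w.take i).sum + k := by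
      intro i hi
      have hj1 : w.length - k ≤ (n + 1 - k) + i := by omega
      have hj2 : (n + 1 - k) + i ≤ w.length := by omega
      have heq := sum_take_rotate' w k ((n + 1 - k) + i) (by omega) hj1 hj2
      have hii : (n + 1 - k) + i - (w.length - k) = i := by omega
      rw [hii, hs] at heq
      have hg := g ((n + 1 - k) + i) (by omega)
      omega
    refine ⟨?_, strict⟩
    intro m hm
    rcases lt_or_ge m k with hmk | hmk
    · have := strict m hmk
      omega
    · have heq := sum_take_rotate w k (m - k) (by omega) (by omega)
      have hii : k + (m - k) = m := by omega
      rw [hii] at heq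
      rcases eq_or_lt_of_le hmk with rfl | hmk'
      · omega
      · have hg := g (m - k) (by omega)
        omega
  · rintro ⟨h1, h2⟩ j hj
    rw [hlr] at hj
    rcases le_or_gt j (w.length - k) with hjk | hjk
    · have heq := sum_take_rotate w k j (by omega) hjk
      have := h1 (k + j) (by omega)
      omega
    · have heq := sum_take_rotate' w k j (by omega) (by omega) (by omega)
      have hik : j - (w.length - k) < k := by omega
      have := h2 _ hik
      rw [hs] at heq
      omega

lemma exists_unique_good_rotate (w : List ℕ) (n : ℕ) (hN : w.length = n + 1)
    (hs : w.sum = n) :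
    ∃! k, (1 ≤ k ∧ k ≤ n + 1) ∧ goodW (w.rotate k) := by
  classical
  set G : ℕ → ℕ := fun m => (w.take m).sum + (n + 1 - m) with hG
  have hex : ∃ k, k ≤ n + 1 ∧ ∀ m ≤ n + 1, G k ≤ G m := by
    obtain ⟨k0, hk0mem, hk0min⟩ :=
      Finset.exists_min_image (Finset.range (n + 2)) G ⟨0, by simp⟩
    exact ⟨k0, by have := Finset.mem_range.mp hk0mem; omega,
      fun m hm => hk0min m (Finset.mem_range.mpr (by omega))⟩
  have hPdec : DecidablePred fun k => k ≤ n + 1 ∧ ∀ m ≤ n + 1, G k ≤ G m := by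
    intro k; infer_instance
  set k := Nat.find hex with hkdef
  have hPk := Nat.find_spec hex
  rw [← hkdef] at hPk
  have hkle : k ≤ n + 1 := hPk.1
  have hTfull : (w.take (n + 1)).sum = n := by
    rw [← hN, List.take_length, hs]
  have hk1 : 1 ≤ k := by
    rcases Nat.eq_zero_or_pos k with h0 | h
    · exfalso
      have := hPk.2 (n + 1) le_rfl
      rw [h0] at this
      simp [hG, hTfull] at this
    · exact h
  have hgood : goodW (w.rotate k) := by
    rw [good_rotate_iff w n hN hs k hk1 hkle]
    constructor
    · intro m hm
      have := hPk.2 m hm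
      simp only [hG] at this
      omega
    · intro i hi
      have hni := Nat.find_min hex hi
      have hile : i ≤ n + 1 := by omega
      push_neg at hni
      obtain ⟨m, hm, hlt⟩ := hni hile
      have := hPk.2 m hm
      simp only [hG] at this hlt
      omega
  have huniq : ∀ k₁ k₂, (1 ≤ k₁ ∧ k₁ ≤ n + 1) → goodW (w.rotate k₁) →
      (1 ≤ k₂ ∧ k₂ ≤ n + 1) → goodW (w.rotate k₂) → k₁ = k₂ := by
    intro k₁ k₂ h₁ g₁ h₂ g₂
    rw [good_rotate_iff w n hN hs k₁ h₁.1 h₁.2] at g₁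
    rw [good_rotate_iff w n hN hs k₂ h₂.1 h₂.2] at g₂
    by_contra hne
    rcases lt_or_gt_of_ne hne with hlt | hlt
    · have := g₂.2 k₁ hlt
      have := g₁.1 k₂ h₂.2
      omega
    · have := g₁.2 k₂ hlt
      have := g₂.1 k₁ h₁.2
      omega
  exact ⟨k, ⟨⟨hk1, hkle⟩, hgood⟩, fun k' h' => huniq k' k ⟨h'.1.1, h'.1.2⟩ h'.2 ⟨hk1, hkle⟩ hgood⟩

end DyckAux

namespace DyckAux

variable {α : Type*} [DecidableEq α]

lemma prod_factorial_erase (m : Multiset α) {a : α} (ha : a ∈ m.toFinset) :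
    ∏ b ∈ m.toFinset, (m.count b).factorial
      = m.count a * ∏ b ∈ (m.erase a).toFinset, ((m.erase a).count b).factorial := by
  have hsub : (m.erase a).toFinset ⊆ m.toFinset :=
    Multiset.toFinset_subset.mpr (Multiset.subset_of_le (Multiset.erase_le a m))
  have hext : ∏ b ∈ (m.erase a).toFinset, ((m.erase a).count b).factorial
      = ∏ b ∈ m.toFinset, ((m.erase a).count b).factorial := by
    refine Finset.prod_subset hsub ?_
    intro x hx hxs
    have : (m.erase a).count x = 0 := by
      simp only [Multiset.mem_toFinset] at hxs
      exact Multiset.count_eq_zero.mpr hxs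
    simp [this]
  rw [hext]
  have hmem : a ∈ m := Multiset.mem_toFinset.mp ha
  have hc1 : 1 ≤ m.count a := Multiset.one_le_count_iff_mem.mpr hmem
  rw [← Finset.mul_prod_erase m.toFinset _ ha, ← Finset.mul_prod_erase m.toFinset _ ha]
  have h1 : ((m.erase a).count a).factorial = (m.count a - 1).factorial := by
    rw [Multiset.count_erase_self]
  have h2 : ∀ b ∈ m.toFinset.erase a, ((m.erase a).count b).factorial = (m.count b).factorial := by
    intro b hb
    rw [Multiset.count_erase_of_ne (Finset.ne_of_mem_erase hb)]
  rw [h1, Finset.prod_congr rfl h2, ← mul_assoc]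
  congr 1
  conv_lhs => rw [← Nat.succ_pred_eq_of_pos hc1]
  rw [Nat.factorial_succ]
  simp only [Nat.pred_eq_sub_one]
  congr 1
  omega

lemma multinomial_erase (m : Multiset α) (hm : m ≠ 0) :
    Nat.multinomial m.toFinset (fun b => m.count b)
      = ∑ a ∈ m.toFinset, Nat.multinomial (m.erase a).toFinset (fun b => (m.erase a).count b) := by
  set P := ∏ b ∈ m.toFinset, (m.count b).factorial with hP
  have hPpos : 0 < P := Finset.prod_pos fun i _ => Nat.factorial_pos _
  apply Nat.eq_of_mul_eq_mul_left hPpos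
  have hcard : ∑ b ∈ m.toFinset, m.count b = Multiset.card m :=
    Multiset.toFinset_sum_count_eq m
  have hspec : P * Nat.multinomial m.toFinset (fun b => m.count b)
      = (Multiset.card m).factorial := by
    rw [hP, Nat.multinomial_spec, hcard]
  rw [hspec, Finset.mul_sum]
  have hterm : ∀ a ∈ m.toFinset,
      P * Nat.multinomial (m.erase a).toFinset (fun b => (m.erase a).count b)
        = m.count a * (Multiset.card m - 1).factorial := by
    intro a ha
    rw [hP, prod_factorial_erase m ha, mul_assoc, Nat.multinomial_spec]
    congr 1
    rw [Multiset.toFinset_sum_count_eq]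
    congr 1
    rw [Multiset.card_erase_of_mem (Multiset.mem_toFinset.mp ha)]
    rfl
  rw [Finset.sum_congr rfl hterm, ← Finset.sum_mul, hcard]
  have hpos : 0 < Multiset.card m := Multiset.card_pos.mpr hm
  rw [← Nat.succ_pred_eq_of_pos hpos, Nat.factorial_succ]
  simp

def listsF (m : Multiset α) : Finset (List α) := (Multiset.lists m).toFinset

lemma mem_listsF_iff (m : Multiset α) (l : List α) : l ∈ listsF m ↔ m = ⟦l⟧ := by
  simp [listsF, Multiset.mem_lists_iff]

lemma lists_eq_biUnion (m : Multiset α) (hm : m ≠ 0) :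
    listsF m = m.toFinset.biUnion (fun a => (listsF (m.erase a)).image (a :: ·)) := by
  ext l
  simp only [mem_listsF_iff, Finset.mem_biUnion, Finset.mem_image,
    Multiset.mem_toFinset]
  constructor
  · intro hml
    cases l with
    | nil => exact absurd (by simpa using hml) hm
    | cons b t =>
        refine ⟨b, by rw [hml]; simp, t, ?_, rfl⟩
        rw [hml]
        show ((b ::ₘ (t : Multiset α)).erase b) = _
        rw [Multiset.erase_cons_head]
        rfl
  · rintro ⟨a, ha, t, ht, rfl⟩
    show m = a ::ₘ (t : Multiset α)
    have ht' : m.erase a = (t : Multiset α) := ht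
    rw [← ht', Multiset.cons_erase ha]

lemma lists_card (m : Multiset α) :
    (listsF m).card = Nat.multinomial m.toFinset (fun b => m.count b) := by
  induction m using Multiset.strongInductionOn with
  | ih m IH =>
    rcases eq_or_ne m 0 with rfl | hm
    · have : listsF (0 : Multiset α) = {([] : List α)} := by
        ext l
        simp [mem_listsF_iff, eq_comm]
      rw [this]
      simp
    · rw [lists_eq_biUnion m hm, Finset.card_biUnion, multinomial_erase m hm]
      · refine Finset.sum_congr rfl ?_
        intro a ha
        rw [Finset.card_image_of_injective _ (List.cons_injective), 
          IH _ (Multiset.erase_lt.mpr (Multiset.mem_toFinset.mp ha))]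
      · intro x hx y hy hxy
        rw [Function.onFun, Finset.disjoint_left]
        rintro l hlx hly
        simp only [Finset.mem_image] at hlx hly
        obtain ⟨t1, _, rfl⟩ := hlx
        obtain ⟨t2, _, h2⟩ := hly
        exact hxy (by injection h2.symm)

omit [DecidableEq α] in
lemma multinomial_subset (s t : Finset α) (f : α → ℕ) (hst : s ⊆ t)
    (hf : ∀ a ∈ t, a ∉ s → f a = 0) : Nat.multinomial t f = Nat.multinomial s f := by
  have h1 : ∏ i ∈ s, (f i).factorial = ∏ i ∈ t, (f i).factorial :=
    Finset.prod_subset hst (by intro x hx hxs; rw [hf x hx hxs]; simp)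
  have h2 : ∑ i ∈ s, f i = ∑ i ∈ t, f i :=
    Finset.sum_subset hst (by intro x hx hxs; exact hf x hx hxs)
  have hpos : 0 < ∏ i ∈ s, (f i).factorial := Finset.prod_pos fun i _ => Nat.factorial_pos _
  apply Nat.eq_of_mul_eq_mul_left hpos
  calc (∏ i ∈ s, (f i).factorial) * Nat.multinomial t f
      = (∏ i ∈ t, (f i).factorial) * Nat.multinomial t f := by rw [h1]
    _ = (∑ i ∈ t, f i).factorial := Nat.multinomial_spec t f
    _ = (∑ i ∈ s, f i).factorial := by rw [h2]
    _ = (∏ i ∈ s, (f i).factorial) * Nat.multinomial s f := (Nat.multinomial_spec s f).symm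

lemma card_subtype_coe_eq (m : Multiset α) :
    Nat.card {l : List α // (l : Multiset α) = m}
      = Nat.multinomial m.toFinset (fun b => m.count b) := by
  rw [← lists_card]
  rw [← Nat.card_eq_finsetCard (listsF m)]
  apply Nat.card_congr
  exact Equiv.subtypeEquivRight (by
    intro l
    rw [mem_listsF_iff]
    exact ⟨fun h => h.symm, fun h => h.symm⟩)

end DyckAux

namespace DyckAux

section Glue

variable (n : ℕ) (c : ℕ → ℕ)

/-- the target multiset -/
def MM : Multiset ℕ :=
  Multiset.replicate (n + 1 - (∑ j ∈ Finset.range (n + 1), c j)) 0 +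
    ∑ i ∈ Finset.range (n + 1), Multiset.replicate (c i) i

variable (hc0 : c 0 = 0) (hsupp : ∀ i, n < i → c i = 0)
    (hsum : ∑ i ∈ Finset.range (n + 1), i * c i = n)

include hc0 hsum in
lemma L_le : (∑ j ∈ Finset.range (n + 1), c j) ≤ n := by
  calc (∑ j ∈ Finset.range (n + 1), c j) ≤ ∑ j ∈ Finset.range (n + 1), j * c j := by
        apply Finset.sum_le_sum
        intro i hi
        rcases Nat.eq_zero_or_pos i with rfl | h
        · simp [hc0]
        · calc c i = 1 * c i := (one_mul _).symm
            _ ≤ i * c i := Nat.mul_le_mul_right _ h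
    _ = n := hsum

include hc0 hsupp in
lemma count_MM (j : ℕ) :
    (MM n c).count j
      = if j = 0 then n + 1 - (∑ j ∈ Finset.range (n + 1), c j) else c j := by
  rw [MM, Multiset.count_add, Multiset.count_sum']
  have h1 : ∀ i ∈ Finset.range (n + 1),
      (Multiset.replicate (c i) i).count j = if i = j then c i else 0 := by
    intro i _
    rw [Multiset.count_replicate]
  rw [Finset.sum_congr rfl h1]
  have h2 : (∑ i ∈ Finset.range (n + 1), if i = j then c i else 0)
      = if j ∈ Finset.range (n + 1) then c j else 0 := Finset.sum_ite_eq' _ _ _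
  rw [h2, Multiset.count_replicate]
  rcases eq_or_ne j 0 with rfl | hj
  · simp [hc0]
  · rw [if_neg (fun h : (0:ℕ) = j => hj h.symm), if_neg hj, zero_add]
    split_ifs with h
    · rfl
    · rw [Finset.mem_range, not_lt] at h
      exact (hsupp j (by omega)).symm

include hc0 hsupp hsum in
lemma wpred_iff_coe (w : List ℕ) :
    Wpred n c w ↔ (↑w : Multiset ℕ) = MM n c := by
  constructor
  · rintro ⟨hlen, hcnt⟩
    have hsubs : w.toFinset ⊆ Finset.range (n + 1) := by
      intro x hx
      rw [List.mem_toFinset] at hx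
      rw [Finset.mem_range]
      by_contra hgt
      have hx0 : x ≠ 0 := by omega
      have := hcnt x hx0
      rw [hsupp x (by omega)] at this
      rw [← List.count_pos_iff] at hx
      omega
    have hlensum : ∑ i ∈ Finset.range (n + 1), w.count i = w.length := by
      have h1 : ∑ i ∈ (↑w : Multiset ℕ).toFinset, Multiset.count i (↑w : Multiset ℕ)
          = ∑ i ∈ Finset.range (n + 1), Multiset.count i (↑w : Multiset ℕ) := by
        refine Finset.sum_subset (by
          intro x hx
          exact hsubs (by simpa using hx)) (by
          intro x _ hxs
          rw [Multiset.count_eq_zero]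
          simpa using hxs)
      have h2 := Multiset.toFinset_sum_count_eq (↑w : Multiset ℕ)
      rw [h1] at h2
      simpa [Multiset.coe_count] using h2
    have hc00 : w.count 0 = n + 1 - (∑ j ∈ Finset.range (n + 1), c j) := by
      have hsplit : w.count 0 + ∑ i ∈ (Finset.range (n + 1)).erase 0, w.count i
          = ∑ i ∈ Finset.range (n + 1), w.count i :=
        Finset.add_sum_erase _ (fun i => w.count i)
          (Finset.mem_range.mpr (by omega : (0:ℕ) < n + 1))
      have hsplit2 : c 0 + ∑ i ∈ (Finset.range (n + 1)).erase 0, c i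
          = ∑ i ∈ Finset.range (n + 1), c i :=
        Finset.add_sum_erase _ c (Finset.mem_range.mpr (by omega : (0:ℕ) < n + 1))
      have heq : ∑ i ∈ (Finset.range (n + 1)).erase 0, w.count i
          = ∑ i ∈ (Finset.range (n + 1)).erase 0, c i := by
        apply Finset.sum_congr rfl
        intro i hi
        exact hcnt i (Finset.ne_of_mem_erase hi)
      have hLn := L_le n c hc0 hsum
      rw [hlen] at hlensum
      omega
    apply Multiset.ext.mpr
    intro j
    rw [count_MM n c hc0 hsupp, Multiset.coe_count]
    rcases eq_or_ne j 0 with rfl | hj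
    · simpa using hc00
    · rw [if_neg hj]
      exact hcnt j hj
  · intro h
    have hLn := L_le n c hc0 hsum
    constructor
    · have := Multiset.coe_card w
      rw [h] at this
      rw [← this, MM, Multiset.card_add, Multiset.card_replicate]
      have hcs : Multiset.card (∑ i ∈ Finset.range (n + 1), Multiset.replicate (c i) i)
          = ∑ i ∈ Finset.range (n + 1), c i := by
        classical
        induction (Finset.range (n + 1)) using Finset.induction with
        | empty => simp
        | insert hx ih => simp_all
      rw [hcs]
      omega
    · intro i hi
      have := count_MM n c hc0 hsupp i
      rw [← h, Multiset.coe_count, if_neg hi] at this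
      exact this

include hc0 hsupp hsum in
lemma wpred_sum {w : List ℕ} (hw : Wpred n c w) : w.sum = n := by
  have h := (wpred_iff_coe n c hc0 hsupp hsum w).mp hw
  have hs : (↑w : Multiset ℕ).sum = w.sum := by simp
  rw [h] at hs
  rw [← hs, MM, Multiset.sum_add, Multiset.sum_replicate]
  have : (∑ i ∈ Finset.range (n + 1), Multiset.replicate (c i) i).sum
      = ∑ i ∈ Finset.range (n + 1), c i * i := by
    classical
    induction (Finset.range (n + 1)) using Finset.induction with
    | empty => simp
    | insert hx ih => simp_all [Multiset.sum_replicate]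
  rw [this, smul_zero, zero_add,
    show (∑ i ∈ Finset.range (n + 1), c i * i) = ∑ i ∈ Finset.range (n + 1), i * c i from
      Finset.sum_congr rfl (fun i _ => Nat.mul_comm _ _)]
  exact hsum

end Glue

end DyckAux

namespace DyckAux

lemma rotate_len {α : Type*} {l : List α} {m : ℕ} (h : l.length = m) :
    l.rotate m = l := by subst h; exact List.rotate_length l

lemma take_len_append {α : Type*} {m : ℕ} (l1 l2 : List α) (h : l1.length = m) :
    (l1 ++ l2).take m = l1 := by subst h; exact List.take_left

section Glue2

variable {n : ℕ} {c : ℕ → ℕ}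

lemma apred_to_good {a : List ℕ} (ha : Apred n c a) :
    Wpred n c (a ++ [0]) ∧ goodW (a ++ [0]) := by
  obtain ⟨hl, hs, ht, hc⟩ := ha
  refine ⟨⟨by simp [hl], fun i hi => ?_⟩, ?_⟩
  · have h0 : List.count i [0] = 0 := List.count_eq_zero.mpr (by simpa using hi)
    rw [List.count_append, h0, Nat.add_zero]
    exact hc i hi
  · intro j hj
    rw [List.length_append, hl] at hj
    simp only [List.length_singleton] at hj
    rw [List.take_append, List.sum_append]
    have := ht j (by omega)
    omega

lemma good_to_apred (hc0 : c 0 = 0) (hsupp : ∀ i, n < i → c i = 0)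
    (hsum : ∑ i ∈ Finset.range (n + 1), i * c i = n)
    {w : List ℕ} (hw : Wpred n c w) (hg : goodW w) :
    Apred n c (w.take n) ∧ w.take n ++ [0] = w := by
  have hws := wpred_sum n c hc0 hsupp hsum hw
  obtain ⟨hlen, hcnt⟩ := hw
  have hTn : n ≤ (w.take n).sum := hg n (by omega)
  have hsplit : (w.take n).sum + (w.drop n).sum = w.sum := by
    rw [← List.sum_append, List.take_append_drop]
  have hdlen : (w.drop n).length = 1 := by simp [hlen]
  obtain ⟨x, hx⟩ := List.length_eq_one_iff.mp hdlen
  have hxsum : (w.drop n).sum = x := by rw [hx]; simp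
  have hx0 : x = 0 := by omega
  have hweq : w.take n ++ [0] = w := by
    rw [← hx0, ← hx, List.take_append_drop]
  refine ⟨⟨by simp [hlen], by omega, ?_, ?_⟩, hweq⟩
  · intro j hj
    rw [List.take_take, min_eq_left hj]
    exact hg j (by omega)
  · intro i hi
    have hci := hcnt i hi
    have h0 : List.count i [0] = 0 := List.count_eq_zero.mpr (by simpa using hi)
    rw [← hweq, List.count_append, h0, Nat.add_zero] at hci
    exact hci

lemma wpred_rotate {w : List ℕ} (k : ℕ) (hw : Wpred n c w) : Wpred n c (w.rotate k) := by
  refine ⟨by simp [hw.1], fun i hi => ?_⟩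
  rw [(List.rotate_perm w k).count_eq i]
  exact hw.2 i hi

end Glue2

/-- the unique good-rotation amount -/
noncomputable def kOf (n : ℕ) (w : List ℕ) : ℕ :=
  sInf {k | (1 ≤ k ∧ k ≤ n + 1) ∧ goodW (w.rotate k)}

lemma kOf_spec {n : ℕ} {w : List ℕ}
    (hex : ∃! k, (1 ≤ k ∧ k ≤ n + 1) ∧ goodW (w.rotate k)) :
    (1 ≤ kOf n w ∧ kOf n w ≤ n + 1) ∧ goodW (w.rotate (kOf n w)) := by
  obtain ⟨k, hk, -⟩ := hex
  exact Nat.sInf_mem (s := {k | (1 ≤ k ∧ k ≤ n + 1) ∧ goodW (w.rotate k)}) ⟨k, hk⟩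

lemma kOf_eq {n : ℕ} {w : List ℕ}
    (hex : ∃! k, (1 ≤ k ∧ k ≤ n + 1) ∧ goodW (w.rotate k))
    {k : ℕ} (hk : (1 ≤ k ∧ k ≤ n + 1) ∧ goodW (w.rotate k)) : kOf n w = k :=
  hex.unique (kOf_spec hex) hk

end DyckAux


/-- The number of Dyck paths of order `n` whose maximal vertical run lengths have
    multiplicities `c i` (so `∑ i·c i = n`, with `ℓ = ∑ c i` runs) is
    `(1/(n+1))·multinomial(n+1; c₁,…,c_n, n−ℓ+1)`. -/
theorem card_dyck_fixed_run_multiplicities (n : ℕ) (c : ℕ → ℕ) (hc0 : c 0 = 0)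
    (hsupp : ∀ i, n < i → c i = 0)
    (hsum : ∑ i ∈ Finset.range (n + 1), i * c i = n) :
    (n + 1) * Nat.card {D : List Bool // IsDyck n D ∧ ∀ i, (runLens D).count i = c i}
      = Nat.multinomial (Finset.range (n + 1))
          (fun i => if i = 0 then n - (∑ j ∈ Finset.range (n + 1), c j) + 1 else c i) := by
  classical
  have hLn : (∑ j ∈ Finset.range (n + 1), c j) ≤ n := DyckAux.L_le n c hc0 hsum
  -- Equiv 1 : Dyck paths ≃ run sequences
  let e1 : {D : List Bool // IsDyck n D ∧ ∀ i, (runLens D).count i = c i} ≃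
      {a : List ℕ // DyckAux.Apred n c a} :=
    { toFun := fun D => ⟨DyckAux.dec 0 D.1, (DyckAux.apred_of_dyck D.2.1 D.2.2).1⟩
      invFun := fun a => ⟨DyckAux.enc a.1, DyckAux.dyck_of_apred hc0 a.2⟩
      left_inv := fun D => Subtype.ext (DyckAux.apred_of_dyck D.2.1 D.2.2).2
      right_inv := fun a => Subtype.ext (DyckAux.dec_enc a.1) }
  -- Equiv 2 : run sequences ≃ good words
  let e2 : {a : List ℕ // DyckAux.Apred n c a} ≃
      {w : List ℕ // DyckAux.Wpred n c w ∧ DyckAux.goodW w} :=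
    { toFun := fun a => ⟨a.1 ++ [0], DyckAux.apred_to_good a.2⟩
      invFun := fun w => ⟨w.1.take n,
        (DyckAux.good_to_apred hc0 hsupp hsum w.2.1 w.2.2).1⟩
      left_inv := fun a => Subtype.ext (DyckAux.take_len_append a.1 [0] a.2.1)
      right_inv := fun w => Subtype.ext
        (DyckAux.good_to_apred hc0 hsupp hsum w.2.1 w.2.2).2 }
  -- Equiv 3 : all words ≃ good words × Fin (n+1)  (cycle lemma)
  have key : ∀ w : List ℕ, DyckAux.Wpred n c w →
      ∃! k, (1 ≤ k ∧ k ≤ n + 1) ∧ DyckAux.goodW (w.rotate k) :=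
    fun w hw => DyckAux.exists_unique_good_rotate w n hw.1
      (DyckAux.wpred_sum n c hc0 hsupp hsum hw)
  let e3 : {w : List ℕ // DyckAux.Wpred n c w} ≃
      {w : List ℕ // DyckAux.Wpred n c w ∧ DyckAux.goodW w} × Fin (n + 1) :=
    { toFun := fun w =>
        (⟨w.1.rotate (DyckAux.kOf n w.1),
          DyckAux.wpred_rotate _ w.2, (DyckAux.kOf_spec (key w.1 w.2)).2⟩,
         ⟨DyckAux.kOf n w.1 - 1, by
            have h := (DyckAux.kOf_spec (key w.1 w.2)).1
            omega⟩)
      invFun := fun p => ⟨p.1.1.rotate (n + 1 - ((p.2 : ℕ) + 1)),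
        DyckAux.wpred_rotate _ p.1.2.1⟩
      left_inv := fun w => by
        apply Subtype.ext
        have h := (DyckAux.kOf_spec (key w.1 w.2)).1
        simp only []
        rw [List.rotate_rotate]
        have harg : DyckAux.kOf n w.1 + (n + 1 - (DyckAux.kOf n w.1 - 1 + 1)) = n + 1 := by
          omega
        rw [harg]
        exact DyckAux.rotate_len w.2.1
      right_inv := fun p => by
        have hlen : p.1.1.length = n + 1 := p.1.2.1.1
        have hj : (p.2 : ℕ) < n + 1 := p.2.2
        have hw' : DyckAux.Wpred n c (p.1.1.rotate (n + 1 - ((p.2 : ℕ) + 1))) :=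
          DyckAux.wpred_rotate _ p.1.2.1
        have hrot : (p.1.1.rotate (n + 1 - ((p.2 : ℕ) + 1))).rotate ((p.2 : ℕ) + 1)
            = p.1.1 := by
          rw [List.rotate_rotate]
          have harg : n + 1 - ((p.2 : ℕ) + 1) + ((p.2 : ℕ) + 1) = n + 1 := by omega
          rw [harg]
          exact DyckAux.rotate_len hlen
        have hk : DyckAux.kOf n (p.1.1.rotate (n + 1 - ((p.2 : ℕ) + 1))) = (p.2 : ℕ) + 1 :=
          DyckAux.kOf_eq (key _ hw') ⟨⟨by omega, by omega⟩, by rw [hrot]; exact p.1.2.2⟩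
        apply Prod.ext
        · apply Subtype.ext
          simp only []
          rw [hk, hrot]
        · apply Fin.ext
          simp only [hk]
          omega }
  -- Equiv 4 : all words ≃ lists of the multiset MM
  let e4 : {w : List ℕ // DyckAux.Wpred n c w} ≃
      {l : List ℕ // (l : Multiset ℕ) = DyckAux.MM n c} :=
    Equiv.subtypeEquivRight (DyckAux.wpred_iff_coe n c hc0 hsupp hsum)
  have h1 : Nat.card {D : List Bool // IsDyck n D ∧ ∀ i, (runLens D).count i = c i}
      = Nat.card {w : List ℕ // DyckAux.Wpred n c w ∧ DyckAux.goodW w} :=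
    Nat.card_congr (e1.trans e2)
  have h2 : Nat.card {w : List ℕ // DyckAux.Wpred n c w}
      = Nat.card {w : List ℕ // DyckAux.Wpred n c w ∧ DyckAux.goodW w} * (n + 1) := by
    rw [Nat.card_congr e3, Nat.card_prod]
    simp
  have h3 : Nat.card {w : List ℕ // DyckAux.Wpred n c w}
      = Nat.multinomial (DyckAux.MM n c).toFinset (fun b => (DyckAux.MM n c).count b) := by
    rw [Nat.card_congr e4]
    exact DyckAux.card_subtype_coe_eq _
  have h4 : Nat.multinomial (Finset.range (n + 1))
        (fun i => if i = 0 then n - (∑ j ∈ Finset.range (n + 1), c j) + 1 else c i)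
      = Nat.multinomial (DyckAux.MM n c).toFinset (fun b => (DyckAux.MM n c).count b) := by
    have hsub : (DyckAux.MM n c).toFinset ⊆ Finset.range (n + 1) := by
      intro x hx
      rw [Multiset.mem_toFinset, ← Multiset.count_pos, DyckAux.count_MM n c hc0 hsupp] at hx
      rw [Finset.mem_range]
      rcases eq_or_ne x 0 with rfl | hx0
      · omega
      · rw [if_neg hx0] at hx
        by_contra hgt
        rw [hsupp x (by omega)] at hx
        omega
    have hzero : ∀ a ∈ Finset.range (n + 1), a ∉ (DyckAux.MM n c).toFinset →
        (fun i => if i = 0 then n - (∑ j ∈ Finset.range (n + 1), c j) + 1 else c i) a = 0 := by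
      intro a _ ha
      rw [Multiset.mem_toFinset, ← Multiset.count_pos, DyckAux.count_MM n c hc0 hsupp,
        Nat.pos_iff_ne_zero, not_not] at ha
      rcases eq_or_ne a 0 with rfl | ha0
      · rw [if_pos rfl] at ha
        omega
      · simp only [if_neg ha0] at ha ⊢
        exact ha
    rw [DyckAux.multinomial_subset _ _ _ hsub hzero]
    apply Nat.multinomial_congr
    intro a ha
    rw [DyckAux.count_MM n c hc0 hsupp]
    rcases eq_or_ne a 0 with rfl | ha0
    · simp only [eq_self_iff_true, if_true]
      omega
    · simp only [if_neg ha0]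
  rw [h1, h4, ← h3, Nat.mul_comm]
  exact h2.symm
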